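/- arXiv:1612.01360 — 2 statements merged into one kernel-verified Lean document; each statement's English description precedes it below -/
import Mathlib

section
/- Let φ : G → Fin k be a perfect coloring of H (with any parameter matrix). If φ((y·z)·(y·z)·v) = φ(v) for every v ∈ X, then φ((y·z)·(y·z)·w) = φ(w) for every w ∈ G; that is, if y·z·y·z is a period of φ on the double zigzag line X, then it is a period of the whole coloring. -/
namespace HexGrid

/-- Relations of the hexagonal grid group: x² = y² = z² = (x·y·z)² = 1. -/
def hexRels : Set (FreeGroup (Fin 3)) :=
  {FreeGroup.of 0 * FreeGroup.of 0,
   FreeGroup.of 1 * FreeGroup.of 1,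
   FreeGroup.of 2 * FreeGroup.of 2,
   FreeGroup.of 0 * FreeGroup.of 1 * FreeGroup.of 2 *
     (FreeGroup.of 0 * FreeGroup.of 1 * FreeGroup.of 2)}

/-- The group `G = ⟨x, y, z ∣ x² = y² = z² = (x·y·z)² = 1⟩`. -/
abbrev G := PresentedGroup hexRels

/-- The generators of `G`. -/
def gen (i : Fin 3) : G := PresentedGroup.of i

def x : G := gen 0
def y : G := gen 1
def z : G := gen 2

lemma gen_mul_self (i : Fin 3) : gen i * gen i = 1 := by
  have h : FreeGroup.of i * FreeGroup.of i ∈ Subgroup.normalClosure hexRels :=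
    Subgroup.subset_normalClosure (by fin_cases i <;> simp [hexRels])
  exact (QuotientGroup.eq_one_iff _).mpr h

/-- The infinite hexagonal grid `H`: the Cayley graph of `G` with respect to `{x, y, z}`;
`u` and `v` are adjacent iff `v ∈ {u·x, u·y, u·z}`. -/
def H : SimpleGraph G where
  Adj u v := u ≠ v ∧ ∃ i : Fin 3, v = u * gen i
  symm := by
    constructor
    rintro u v ⟨hne, i, rfl⟩
    exact ⟨hne.symm, i, by rw [mul_assoc, gen_mul_self, mul_one]⟩
  loopless := by constructor; rintro u ⟨hne, -⟩; exact hne rfl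

/-- `φ` is a perfect coloring of `H` with parameter matrix `A`: for every vertex `u` and
every color `j`, the number of neighbors of `u` in `H` colored `j` equals `A (φ u) j`. -/
def IsPerfectColoring {k : ℕ} (φ : G → Fin k) (A : Matrix (Fin k) (Fin k) ℕ) : Prop :=
  ∀ u : G, ∀ j : Fin k, Set.ncard {v : G | H.Adj u v ∧ φ v = j} = A (φ u) j

/-- A matrix is tridiagonal if its entries vanish whenever the indices differ by more
than one. -/
def IsTridiagonal {k : ℕ} (A : Matrix (Fin k) (Fin k) ℕ) : Prop :=
  ∀ i j : Fin k, ((i : ℕ) + 1 < (j : ℕ) ∨ (j : ℕ) + 1 < (i : ℕ)) → A i j = 0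

/-- Two colorings are equivalent if one is obtained from the other by composing with a
graph automorphism of `H`. -/
def EquivColoring {k : ℕ} (φ ψ : G → Fin k) : Prop :=
  ∃ g : H ≃g H, ψ = fun v => φ (g v)

/-- The double (zigzag) line `X = {(y·z)ⁿ : n ∈ ℤ} ∪ {(y·z)ⁿ·x : n ∈ ℤ}`. -/
def Xline : Set G := {g : G | ∃ n : ℤ, g = (y * z) ^ n ∨ g = (y * z) ^ n * x}

-- ### basic relations

lemma hxx : x * x = 1 := gen_mul_self 0
lemma hyy : y * y = 1 := gen_mul_self 1
lemma hzz : z * z = 1 := gen_mul_self 2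

lemma hx_inv : x⁻¹ = x := inv_eq_of_mul_eq_one_right hxx
lemma hy_inv : y⁻¹ = y := inv_eq_of_mul_eq_one_right hyy
lemma hz_inv : z⁻¹ = z := inv_eq_of_mul_eq_one_right hzz

lemma hxyzxyz : (x * y * z) * (x * y * z) = 1 := by
  have h : (FreeGroup.of 0 * FreeGroup.of 1 * FreeGroup.of 2 *
      (FreeGroup.of 0 * FreeGroup.of 1 * FreeGroup.of 2) : FreeGroup (Fin 3)) ∈
      Subgroup.normalClosure hexRels :=
    Subgroup.subset_normalClosure (by simp [hexRels])
  have := (QuotientGroup.eq_one_iff _).mpr h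
  have e : ((PresentedGroup.mk hexRels)
      (FreeGroup.of 0 * FreeGroup.of 1 * FreeGroup.of 2 *
        (FreeGroup.of 0 * FreeGroup.of 1 * FreeGroup.of 2))) =
      (x * y * z) * (x * y * z) := by
    simp only [map_mul]; rfl
  rw [← e]; exact this

lemma hzyx : z * y * x = x * y * z := by
  have h1 : (x * y * z)⁻¹ = x * y * z := inv_eq_of_mul_eq_one_right hxyzxyz
  calc z * y * x = (x * y * z)⁻¹ := by
        rw [mul_inv_rev, mul_inv_rev, hx_inv, hy_inv, hz_inv]; group
    _ = x * y * z := h1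

lemma hcomm : Commute (y * z) (y * x) := by
  show (y * z) * (y * x) = (y * x) * (y * z)
  have h : z * (y * x) = x * (y * z) := by
    rw [← mul_assoc, ← mul_assoc]; exact hzyx
  rw [mul_assoc, h, ← mul_assoc]

-- ### homomorphism to a Klein four-group, distinguishing the generators

private def genImg : Fin 3 → Multiplicative (ZMod 2 × ZMod 2) :=
  ![Multiplicative.ofAdd (1, 0), Multiplicative.ofAdd (0, 1), Multiplicative.ofAdd (1, 1)]

private lemma relsImg : ∀ r ∈ hexRels, FreeGroup.lift genImg r = 1 := by
  intro r hr
  rcases hr with h | h | h | h <;> subst h <;> simp only [map_mul, FreeGroup.lift_apply_of] <;> decide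

private def Φ : G →* Multiplicative (ZMod 2 × ZMod 2) := PresentedGroup.toGroup relsImg

private lemma Φ_gen (i : Fin 3) : Φ (gen i) = genImg i := PresentedGroup.toGroup.of relsImg

lemma gen_ne_one (i : Fin 3) : gen i ≠ 1 := by
  intro h
  have := congrArg Φ h
  rw [Φ_gen, map_one] at this
  revert this
  fin_cases i <;> decide

lemma gen_injective : Function.Injective gen := by
  intro i j h
  have := congrArg Φ h
  rw [Φ_gen, Φ_gen] at this
  revert this
  fin_cases i <;> fin_cases j <;> decide

-- ### normal form

def NF (a b : ℤ) (s : Bool) : G := (y * z) ^ a * ((y * x) ^ b * cond s y 1)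

/-- commutation in right-associated form -/
lemma hc' (b : ℤ) : y * (z * (y * x) ^ b) = (y * x) ^ b * (y * z) := by
  have h := (hcomm.zpow_right b).eq
  simpa only [mul_assoc] using h

lemma NFy0 (a b : ℤ) : NF a b false * y = NF a b true := by
  simp only [NF, cond, mul_one, mul_assoc]

lemma NFy1 (a b : ℤ) : NF a b true * y = NF a b false := by
  simp only [NF, cond, mul_assoc, hyy, mul_one]

lemma NFx0 (a b : ℤ) : NF a b false * x = NF a (b - 1) true := by
  have hb : (y * x) ^ b = (y * x) ^ (b - 1) * (y * x) := by
    rw [← zpow_add_one, show b - 1 + 1 = b from by ring]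
  simp only [NF, cond, mul_one]
  rw [hb]
  simp only [mul_assoc, hxx, mul_one]

lemma NFx1 (a b : ℤ) : NF a b true * x = NF a (b + 1) false := by
  simp only [NF, cond, mul_one, zpow_add_one, mul_assoc]

lemma NFz0 (a b : ℤ) : NF a b false * z = NF (a - 1) b true := by
  have ha : (y * z) ^ a = (y * z) ^ (a - 1) * (y * z) := by
    rw [← zpow_add_one, show a - 1 + 1 = a from by ring]
  have aux : y * (z * ((y * x) ^ b * z)) = (y * x) ^ b * y := by
    have h := congrArg (· * z) (hc' b)
    simp only [mul_assoc] at h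
    rw [hzz, mul_one] at h
    exact h
  simp only [NF, cond, mul_one]
  rw [ha]
  simp only [mul_assoc]
  rw [aux]

lemma NFz1 (a b : ℤ) : NF a b true * z = NF (a + 1) b false := by
  simp only [NF, cond, mul_one]
  rw [zpow_add_one]
  simp only [mul_assoc]
  rw [← hc']

lemma NFshift (a b : ℤ) (s : Bool) : (y * z) * (y * z) * NF a b s = NF (a + 2) b s := by
  simp only [NF]
  rw [show a + 2 = 1 + (1 + a) from by ring, zpow_add, zpow_add, zpow_one]
  simp only [mul_assoc]

lemma X1 (n : ℤ) : (y * z) ^ n = NF n 0 false := by simp [NF]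

lemma X2 (n : ℤ) : (y * z) ^ n * x = NF n (-1) true := by
  have : (y * x) ^ (-1 : ℤ) * y = x := by
    rw [zpow_neg_one, mul_inv_rev, hx_inv, hy_inv, mul_assoc, hyy, mul_one]
  simp only [NF, cond]
  rw [this]

lemma exists_NF (w : G) : ∃ a b s, w = NF a b s := by
  obtain ⟨v, rfl⟩ := PresentedGroup.mk_surjective hexRels w
  have key : ∀ v : FreeGroup (Fin 3), ∀ a b : ℤ, ∀ s : Bool,
      ∃ a' b' s', NF a b s * PresentedGroup.mk hexRels v = NF a' b' s' := by
    intro v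
    induction v using FreeGroup.induction_on with
    | C1 => exact fun a b s => ⟨a, b, s, by rw [map_one, mul_one]⟩
    | of i =>
      intro a b s
      have hpure : (pure i : FreeGroup (Fin 3)) = FreeGroup.of i := rfl
      have hg : PresentedGroup.mk hexRels (FreeGroup.of i) = gen i := rfl
      fin_cases i <;> cases s
      · exact ⟨a, b - 1, true, by rw [hg]; exact NFx0 a b⟩
      · exact ⟨a, b + 1, false, by rw [hg]; exact NFx1 a b⟩
      · exact ⟨a, b, true, by rw [hg]; exact NFy0 a b⟩
      · exact ⟨a, b, false, by rw [hg]; exact NFy1 a b⟩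
      · exact ⟨a - 1, b, true, by rw [hg]; exact NFz0 a b⟩
      · exact ⟨a + 1, b, false, by rw [hg]; exact NFz1 a b⟩
    | inv_of i ih =>
      intro a b s
      have hg : PresentedGroup.mk hexRels ((FreeGroup.of i)⁻¹) =
          PresentedGroup.mk hexRels (FreeGroup.of i) := by
        rw [map_inv]
        exact inv_eq_of_mul_eq_one_right (gen_mul_self i)
      have hpure : (pure i : FreeGroup (Fin 3)) = FreeGroup.of i := rfl
      rw [hg]
      exact ih a b s
    | mul v1 v2 ih1 ih2 =>
      intro a b s
      rw [map_mul, ← mul_assoc]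
      obtain ⟨a1, b1, s1, h1⟩ := ih1 a b s
      rw [h1]
      exact ih2 a1 b1 s1
  obtain ⟨a, b, s, h⟩ := key v 0 0 false
  exact ⟨a, b, s, by rw [← h]; simp [NF]⟩

-- ### indicator machinery

def ind {α : Type*} [DecidableEq α] (a j : α) : ℕ := if a = j then 1 else 0

lemma ind_self {α : Type*} [DecidableEq α] (a : α) : ind a a = 1 := by simp [ind]

lemma ind_ne {α : Type*} [DecidableEq α] {a j : α} (h : a ≠ j) : ind a j = 0 := by simp [ind, h]

lemma ind_le {α : Type*} [DecidableEq α] (a j : α) : ind a j ≤ 1 := by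
  unfold ind; split <;> omega

lemma eq_of_ind {α : Type*} [DecidableEq α] {u v : α} (h : ∀ j, ind u j = ind v j) : u = v := by
  by_contra hne
  have h2 := h u
  rw [ind_self, ind_ne (fun hvu : v = u => hne hvu.symm)] at h2
  exact one_ne_zero h2

lemma cancel1 {α : Type*} [DecidableEq α] {u v a1 a2 b1 b2 : α}
    (h : ∀ j, ind u j + ind a1 j + ind a2 j = ind v j + ind b1 j + ind b2 j)
    (h1 : a1 = b1) (h2 : a2 = b2) : u = v := by
  subst h1; subst h2
  exact eq_of_ind fun j => by have := h j; omega

lemma cancel2 {α : Type*} [DecidableEq α] {u v a1 a2 b1 b2 : α}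
    (hc : u = v)
    (h : ∀ j, ind u j + ind a1 j + ind a2 j = ind v j + ind b1 j + ind b2 j) :
    ∀ j, ind a1 j + ind a2 j = ind b1 j + ind b2 j := by
  subst hc
  intro j; have := h j; omega

lemma pair_swap {α : Type*} [DecidableEq α] {a b c d : α}
    (h : ∀ j, ind a j + ind b j = ind c j + ind d j) :
    (a = c ∧ b = d) ∨ (a = d ∧ b = c) := by
  by_cases hc : c = a
  · subst hc
    left
    exact ⟨rfl, eq_of_ind fun j => by have := h j; omega⟩
  · by_cases hd : d = a
    · subst hd
      right
      exact ⟨rfl, eq_of_ind fun j => by have := h j; omega⟩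
    · exfalso
      have hj := h a
      rw [ind_self, ind_ne hc, ind_ne hd] at hj
      have := ind_le b a
      omega

lemma chain {α : Type*} [DecidableEq α] (f : ℤ → α)
    (h : ∀ n : ℤ, ∀ j, ind (f n) j + ind (f (n + 1)) j = ind (f (n + 2)) j + ind (f (n + 3)) j) :
    ∀ n, f (n + 2) = f n := by
  intro n
  rcases pair_swap (h n) with ⟨h1, _⟩ | ⟨h1, h2⟩
  · exact h1.symm
  · -- h1 : f n = f (n + 3), h2 : f (n + 1) = f (n + 2)
    have hh := h (n + 1) (f (n + 1))
    rw [show n + 1 + 1 = n + 2 from by ring, show n + 1 + 2 = n + 3 from by ring,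
      show n + 1 + 3 = n + 4 from by ring] at hh
    rw [ind_self] at hh
    have e2 : ind (f (n + 2)) (f (n + 1)) = 1 := by
      show (if f (n + 2) = f (n + 1) then 1 else 0) = 1
      rw [if_pos h2.symm]
    rw [e2] at hh
    have h3 : f (n + 3) = f (n + 1) := by
      by_contra hne
      rw [ind_ne hne] at hh
      have := ind_le (f (n + 4)) (f (n + 1))
      omega
    exact h2.symm.trans (h3.symm.trans h1.symm)

-- ### counting lemma

lemma count_eq {k : ℕ} (φ : G → Fin k) (A : Matrix (Fin k) (Fin k) ℕ)
    (hφ : IsPerfectColoring φ A) (u : G) (j : Fin k) :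
    ind (φ (u * x)) j + ind (φ (u * y)) j + ind (φ (u * z)) j = A (φ u) j := by
  classical
  have hinj : Function.Injective (fun i : Fin 3 => u * gen i) := fun i1 i2 h =>
    gen_injective (mul_left_cancel h)
  have hset : {v : G | H.Adj u v ∧ φ v = j} =
      ↑((Finset.univ.filter (fun i : Fin 3 => φ (u * gen i) = j)).image
        (fun i => u * gen i)) := by
    ext v
    constructor
    · rintro ⟨⟨hne, i, rfl⟩, hj⟩
      exact Finset.mem_coe.2
        (Finset.mem_image.2 ⟨i, Finset.mem_filter.2 ⟨Finset.mem_univ _, hj⟩, rfl⟩)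
    · intro hv
      obtain ⟨i, hi, rfl⟩ := Finset.mem_image.1 (Finset.mem_coe.1 hv)
      exact ⟨⟨fun he => gen_ne_one i (left_eq_mul.1 he), i, rfl⟩,
        (Finset.mem_filter.1 hi).2⟩
  have h2 := hφ u j
  rw [hset, Set.ncard_coe_finset, Finset.card_image_of_injective _ hinj,
    Finset.card_filter, Fin.sum_univ_three] at h2
  exact h2

-- ### the combinatorial core

lemma comb {α : Type*} [DecidableEq α] (E : ℤ → ℤ → Bool → α) (A : α → α → ℕ)
    (Cf : ∀ a b : ℤ, ∀ j, ind (E a (b-1) true) j + ind (E a b true) j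
        + ind (E (a-1) b true) j = A (E a b false) j)
    (Ct : ∀ a b : ℤ, ∀ j, ind (E a (b+1) false) j + ind (E a b false) j
        + ind (E (a+1) b false) j = A (E a b true) j)
    (h0 : ∀ a, E (a+2) 0 false = E a 0 false)
    (h1 : ∀ a, E (a+2) (-1) true = E a (-1) true) :
    ∀ b s a, E (a+2) b s = E a b s := by
  have Sup1 : ∀ b : ℤ, (∀ a, E (a+2) b false = E a b false) →
      (∀ a, E (a+2) b true = E a b true) →
      ∀ a, E (a+2) (b+1) false = E a (b+1) false := by
    intro b hf ht a
    have key : ∀ j, ind (E (a+2) (b+1) false) j + ind (E (a+2) b false) j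
        + ind (E (a+2+1) b false) j
        = ind (E a (b+1) false) j + ind (E a b false) j + ind (E (a+1) b false) j := by
      intro j
      refine (Ct (a+2) b j).trans ?_
      rw [ht a]
      exact (Ct a b j).symm
    refine cancel1 key (hf a) ?_
    have h := hf (a+1); rwa [show a+1+2 = a+2+1 from by ring] at h
  have Sdown1 : ∀ b : ℤ, (∀ a, E (a+2) b false = E a b false) →
      (∀ a, E (a+2) b true = E a b true) →
      ∀ a, E (a+2) (b-1) true = E a (b-1) true := by
    intro b hf ht a
    have key : ∀ j, ind (E (a+2) (b-1) true) j + ind (E (a+2) b true) j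
        + ind (E (a+2-1) b true) j
        = ind (E a (b-1) true) j + ind (E a b true) j + ind (E (a-1) b true) j := by
      intro j
      refine (Cf (a+2) b j).trans ?_
      rw [hf a]
      exact (Cf a b j).symm
    refine cancel1 key (ht a) ?_
    have h := ht (a-1); rwa [show a-1+2 = a+2-1 from by ring] at h
  have Sup2 : ∀ b : ℤ, (∀ a, E (a+2) (b+1) false = E a (b+1) false) →
      (∀ a, E (a+2) b true = E a b true) →
      ∀ a, E (a+2) (b+1) true = E a (b+1) true := by
    intro b hf1 ht
    have Cf' : ∀ a : ℤ, ∀ j, ind (E a b true) j + ind (E a (b+1) true) j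
        + ind (E (a-1) (b+1) true) j = A (E a (b+1) false) j := by
      intro a j
      have h := Cf a (b+1) j
      rwa [show b+1-1 = b from by ring] at h
    have pairEq : ∀ a : ℤ, ∀ j, ind (E (a+2) (b+1) true) j + ind (E (a+2-1) (b+1) true) j
        = ind (E a (b+1) true) j + ind (E (a-1) (b+1) true) j := by
      intro a
      refine cancel2 (ht a) ?_
      intro j
      refine (Cf' (a+2) j).trans ?_
      rw [hf1 a]
      exact (Cf' a j).symm
    have hyp : ∀ n : ℤ, ∀ j, ind (E n (b+1) true) j + ind (E (n+1) (b+1) true) j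
        = ind (E (n+2) (b+1) true) j + ind (E (n+3) (b+1) true) j := by
      intro n j
      have h := pairEq (n+1) j
      rw [show n+1+2-1 = n+2 from by ring] at h
      rw [show n+1+2 = n+3 from by ring] at h
      rw [show n+1-1 = n from by ring] at h
      omega
    have hchain := chain (fun n => E n (b+1) true) hyp
    exact fun a => hchain a
  have Sdown2 : ∀ b : ℤ, (∀ a, E (a+2) (b-1) true = E a (b-1) true) →
      (∀ a, E (a+2) b false = E a b false) →
      ∀ a, E (a+2) (b-1) false = E a (b-1) false := by
    intro b ht1 hf
    have Ct' : ∀ a : ℤ, ∀ j, ind (E a b false) j + ind (E a (b-1) false) j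
        + ind (E (a+1) (b-1) false) j = A (E a (b-1) true) j := by
      intro a j
      have h := Ct a (b-1) j
      rwa [show b-1+1 = b from by ring] at h
    have pairEq : ∀ a : ℤ, ∀ j, ind (E (a+2) (b-1) false) j + ind (E (a+2+1) (b-1) false) j
        = ind (E a (b-1) false) j + ind (E (a+1) (b-1) false) j := by
      intro a
      refine cancel2 (hf a) ?_
      intro j
      refine (Ct' (a+2) j).trans ?_
      rw [ht1 a]
      exact (Ct' a j).symm
    have hyp : ∀ n : ℤ, ∀ j, ind (E n (b-1) false) j + ind (E (n+1) (b-1) false) j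
        = ind (E (n+2) (b-1) false) j + ind (E (n+3) (b-1) false) j := by
      intro n j
      have h := pairEq n j
      rw [show n+2+1 = n+3 from by ring] at h
      omega
    have hchain := chain (fun n => E n (b-1) false) hyp
    exact fun a => hchain a
  have base0t : ∀ a, E (a+2) 0 true = E a 0 true := by
    have h := Sup2 (-1)
      (fun a => by rw [show (-1:ℤ)+1 = 0 from by norm_num]; exact h0 a)
      h1
    intro a
    have h2 := h a
    rwa [show (-1:ℤ)+1 = 0 from by norm_num] at h2
  have basem1f : ∀ a, E (a+2) (-1) false = E a (-1) false := by
    have h := Sdown2 0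
      (fun a => by rw [show (0:ℤ)-1 = -1 from by norm_num]; exact h1 a)
      h0
    intro a
    have h2 := h a
    rwa [show (0:ℤ)-1 = -1 from by norm_num] at h2
  have up : ∀ n : ℕ, (∀ a, E (a+2) (n:ℤ) false = E a (n:ℤ) false) ∧
      (∀ a, E (a+2) (n:ℤ) true = E a (n:ℤ) true) := by
    intro n
    induction n with
    | zero => exact ⟨by simpa using h0, by simpa using base0t⟩
    | succ m ih =>
      have e : ((m+1 : ℕ) : ℤ) = (m:ℤ) + 1 := by push_cast; ring
      have hf := Sup1 (m:ℤ) ih.1 ih.2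
      have ht := Sup2 (m:ℤ) hf ih.2
      exact ⟨fun a => by rw [e]; exact hf a, fun a => by rw [e]; exact ht a⟩
  have down : ∀ n : ℕ, (∀ a, E (a+2) (-(n:ℤ)-1) true = E a (-(n:ℤ)-1) true) ∧
      (∀ a, E (a+2) (-(n:ℤ)-1) false = E a (-(n:ℤ)-1) false) := by
    intro n
    induction n with
    | zero => exact ⟨by simpa using h1, by simpa using basem1f⟩
    | succ m ih =>
      have e : -((m+1:ℕ):ℤ) - 1 = (-(m:ℤ)-1) - 1 := by push_cast; ring
      have ht := Sdown1 (-(m:ℤ)-1) ih.2 ih.1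
      have hf := Sdown2 (-(m:ℤ)-1) ht ih.2
      exact ⟨fun a => by rw [e]; exact ht a, fun a => by rw [e]; exact hf a⟩
  intro b s a
  rcases Int.eq_nat_or_neg b with ⟨n, rfl | rfl⟩
  · cases s
    · exact (up n).1 a
    · exact (up n).2 a
  · cases n with
    | zero =>
      cases s
      · simpa using h0 a
      · simpa using base0t a
    | succ m =>
      have e : -((m+1:ℕ):ℤ) = -(m:ℤ)-1 := by push_cast; ring
      cases s
      · rw [e]; exact (down m).2 a
      · rw [e]; exact (down m).1 a

/-- If `(y·z)²` is a period of a perfect coloring on the double line `X`, then it is a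
period of the whole coloring. -/
theorem period_on_line_extends {k : ℕ} (φ : G → Fin k) (A : Matrix (Fin k) (Fin k) ℕ)
    (hφ : IsPerfectColoring φ A)
    (hX : ∀ v ∈ Xline, φ ((y * z) * (y * z) * v) = φ v) :
    ∀ w : G, φ ((y * z) * (y * z) * w) = φ w := by
  have Cf : ∀ a b : ℤ, ∀ j, ind (φ (NF a (b-1) true)) j + ind (φ (NF a b true)) j
      + ind (φ (NF (a-1) b true)) j = A (φ (NF a b false)) j := by
    intro a b j
    have h := count_eq φ A hφ (NF a b false) j
    rwa [NFx0, NFy0, NFz0] at h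
  have Ct : ∀ a b : ℤ, ∀ j, ind (φ (NF a (b+1) false)) j + ind (φ (NF a b false)) j
      + ind (φ (NF (a+1) b false)) j = A (φ (NF a b true)) j := by
    intro a b j
    have h := count_eq φ A hφ (NF a b true) j
    rwa [NFx1, NFy1, NFz1] at h
  have h0 : ∀ a : ℤ, φ (NF (a+2) 0 false) = φ (NF a 0 false) := by
    intro a
    have h := hX ((y*z)^a) ⟨a, Or.inl rfl⟩
    rwa [X1 a, NFshift] at h
  have h1 : ∀ a : ℤ, φ (NF (a+2) (-1) true) = φ (NF a (-1) true) := by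
    intro a
    have h := hX ((y*z)^a * x) ⟨a, Or.inr rfl⟩
    rwa [X2 a, NFshift] at h
  have main := comb (fun a b s => φ (NF a b s)) (fun i j => A i j) Cf Ct h0 h1
  intro w
  obtain ⟨a, b, s, rfl⟩ := exists_NF w
  rw [NFshift]
  exact main b s a


end HexGrid
end

section
/- There is no perfect coloring of H with parameter matrix [[1,2,0],[1,0,2],[0,2,1]] (the array [12-102-21] is infeasible). -/
namespace HexGrid

/-! ### Auxiliary machinery for the infeasibility proof -/

/-- Concrete representation: `G ≅ ℤ² ⋊ C₂`, realized by 3×3 integer matrices. -/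
def Mx : Matrix (Fin 3) (Fin 3) ℤ := !![-1,0,0;0,-1,0;0,0,1]
def My : Matrix (Fin 3) (Fin 3) ℤ := !![-1,0,1;0,-1,0;0,0,1]
def Mz : Matrix (Fin 3) (Fin 3) ℤ := !![-1,0,0;0,-1,1;0,0,1]

lemma hMx : Mx * Mx = 1 := by decide
lemma hMy : My * My = 1 := by decide
lemma hMz : Mz * Mz = 1 := by decide

def Ux : (Matrix (Fin 3) (Fin 3) ℤ)ˣ := ⟨Mx, Mx, hMx, hMx⟩
def Uy : (Matrix (Fin 3) (Fin 3) ℤ)ˣ := ⟨My, My, hMy, hMy⟩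
def Uz : (Matrix (Fin 3) (Fin 3) ℤ)ˣ := ⟨Mz, Mz, hMz, hMz⟩

def fU : Fin 3 → (Matrix (Fin 3) (Fin 3) ℤ)ˣ := ![Ux, Uy, Uz]

lemma relsU : ∀ r ∈ hexRels, FreeGroup.lift fU r = 1 := by
  intro r hr
  simp only [hexRels, Set.mem_insert_iff, Set.mem_singleton_iff] at hr
  rcases hr with rfl | rfl | rfl | rfl <;>
    · simp only [map_mul, FreeGroup.lift_apply_of]
      decide

def π : G →* (Matrix (Fin 3) (Fin 3) ℤ)ˣ := PresentedGroup.toGroup relsU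

lemma π_gen (i : Fin 3) : π (gen i) = fU i := PresentedGroup.toGroup.of relsU

/-- The local counting condition: a vertex of color `c` whose three neighbors (in slot
order) have colors `t0, t1, t2`. -/
abbrev Hc (c t0 t1 t2 : Fin 3) : Prop :=
  ∀ j : Fin 3,
    ((if t0 = j then 1 else 0) + (if t1 = j then 1 else 0) + (if t2 = j then 1 else 0) : ℕ)
      = !![1,2,0;1,0,2;0,2,1] c j

/-- Bridge from `IsPerfectColoring` to the local counting condition. -/
lemma bridge {φ : G → Fin 3} (hφ : IsPerfectColoring φ !![1,2,0;1,0,2;0,2,1]) (u : G) :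
    Hc (φ u) (φ (u * gen 0)) (φ (u * gen 1)) (φ (u * gen 2)) := by
  intro j
  have hset : {v : G | H.Adj u v ∧ φ v = j}
      = (fun i : Fin 3 => u * gen i) '' {i | φ (u * gen i) = j} := by
    ext v
    constructor
    · rintro ⟨⟨hne, i, rfl⟩, hcol⟩
      exact ⟨i, hcol, rfl⟩
    · rintro ⟨i, hi, rfl⟩
      refine ⟨⟨fun heq => ?_, i, rfl⟩, hi⟩
      have h3 : u * 1 = u * gen i := by rw [mul_one]; exact heq
      exact gen_ne_one i (mul_left_cancel h3).symm
  have hinj : Function.Injective (fun i : Fin 3 => u * gen i) := by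
    intro i j h
    exact gen_injective (mul_left_cancel h)
  have hsetfin : {i : Fin 3 | φ (u * gen i) = j}
      = ↑(Finset.univ.filter fun i => φ (u * gen i) = j) := by
    ext i; simp
  have h := hφ u j
  rw [hset, Set.ncard_image_of_injective _ hinj, hsetfin, Set.ncard_coe_finset,
    Finset.card_filter, Fin.sum_univ_three] at h
  exact h

/- Local forcing rules, verified by finite enumeration. -/
lemma R1 : ∀ t1 t2 : Fin 3, Hc 0 0 t1 t2 → t1 = 1 ∧ t2 = 1 := by decide
lemma R2 : ∀ t0 t2 : Fin 3, Hc 1 t0 0 t2 → t0 = 2 ∧ t2 = 2 := by decide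
lemma R3 : ∀ t0 t1 : Fin 3, Hc 1 t0 t1 0 → t0 = 2 ∧ t1 = 2 := by decide
lemma R4 : ∀ t t0 : Fin 3, Hc t t0 2 2 → t = 1 := by decide
lemma R5 : ∀ t : Fin 3, Hc 2 1 t 1 → t = 2 := by decide
lemma R5b : ∀ t : Fin 3, Hc 2 2 t 1 → t = 1 := by decide
lemma R6 : ∀ t tb : Fin 3, Hc t 1 tb 2 → t = 2 := by decide
lemma R7 : ∀ t0 : Fin 3, Hc 2 t0 2 2 → False := by decide
lemma R0of0 : ∀ t0 t1 t2 : Fin 3, Hc 0 t0 t1 t2 → t0 = 0 ∨ t1 = 0 ∨ t2 = 0 := by decide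
lemma R0of1 : ∀ t0 t1 t2 : Fin 3, Hc 1 t0 t1 t2 → t0 = 0 ∨ t1 = 0 ∨ t2 = 0 := by decide
lemma R1of2 : ∀ t0 t1 t2 : Fin 3, Hc 2 t0 t1 t2 → t0 = 1 ∨ t1 = 1 ∨ t2 = 1 := by decide
lemma Rperm1 : ∀ c t0 t1 t2 : Fin 3, Hc c t0 t1 t2 → Hc c t1 t0 t2 := by decide
lemma Rperm2 : ∀ c t0 t1 t2 : Fin 3, Hc c t0 t1 t2 → Hc c t2 t1 t0 := by decide
lemma tri : ∀ v : Fin 3, v = 0 ∨ v = 1 ∨ v = 2 := by decide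

/-- The main local derivation: if some vertex of color `0` has a neighbor of color `0`,
the forced propagation of colors reaches a contradiction. Here `a, b, c` are the three
generators in any order. -/
lemma derivation (f : G → Fin 3) (a b c : G)
    (ha : a * a = 1) (hb : b * b = 1) (hc : c * c = 1)
    (habc : a * (b * c) = c * (b * a))
    (key : ∀ u : G, Hc (f u) (f (u * a)) (f (u * b)) (f (u * c)))
    (u0 : G) (h0 : f u0 = 0) (h1 : f (u0 * a) = 0) : False := by
  -- cancellation lemmas
  have ra : ∀ w : G, w * a * a = w := fun w => by rw [mul_assoc, ha, mul_one]
  have rb : ∀ w : G, w * b * b = w := fun w => by rw [mul_assoc, hb, mul_one]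
  have rc : ∀ w : G, w * c * c = w := fun w => by rw [mul_assoc, hc, mul_one]
  have la : ∀ w : G, a * (a * w) = w := fun w => by rw [← mul_assoc, ha, one_mul]
  have lc : ∀ w : G, c * (c * w) = w := fun w => by rw [← mul_assoc, hc, one_mul]
  -- word identities
  have j1 : c * (a * (b * c)) = b * a := by rw [habc]; exact lc _
  have j2 : b * (a * c) = c * (a * b) := by
    have h : c * (a * (b * c)) * c = (b * a) * c := by rw [j1]
    simp only [mul_assoc] at h
    rw [hc, mul_one] at h
    exact h.symm
  have j3 : b * (c * a) = a * (c * b) := by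
    have h : b * c = a * (c * (b * a)) := by rw [← la (b * c), habc]
    have h2 : (b * c) * a = (a * (c * (b * a))) * a := by rw [← h]
    simp only [mul_assoc] at h2
    rw [ha, mul_one] at h2
    exact h2
  have j4 : c * (b * (a * c)) = a * b := by
    have h : (a * (b * c)) * c = (c * (b * a)) * c := by rw [habc]
    simp only [mul_assoc] at h
    rw [hc, mul_one] at h
    exact h.symm
  have j5 : b * (a * (b * c)) = b * (c * (b * a)) := by rw [habc]
  -- vertex identities
  have e1 : u0 * c * a * b * c = u0 * b * a := by simp only [mul_assoc, j1]
  have e2 : u0 * b * a * c = u0 * c * a * b := by simp only [mul_assoc, j2]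
  have e3 : u0 * b * c * a = u0 * a * c * b := by simp only [mul_assoc, j3]
  have e4 : u0 * b * c * b * a * c = u0 * b * a * b := by simp only [mul_assoc, j4]
  have e5 : u0 * b * a * b * c = u0 * b * c * b * a := by simp only [mul_assoc, j5]
  -- forced propagation
  have k1 := key u0
  rw [h0, h1] at k1
  obtain ⟨hb1, hc1⟩ := R1 _ _ k1
  have k2 := key (u0 * a)
  rw [h1, ra, h0] at k2
  obtain ⟨hab1, hac1⟩ := R1 _ _ k2
  have k3 := key (u0 * b)
  rw [hb1, rb, h0] at k3
  obtain ⟨hba2, hbc2⟩ := R2 _ _ k3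
  have k4 := key (u0 * c)
  rw [hc1, rc, h0] at k4
  obtain ⟨hca2, hcb2⟩ := R3 _ _ k4
  have k5 := key (u0 * a * c)
  rw [hac1, rc, h1] at k5
  obtain ⟨haca2, hacb2⟩ := R3 _ _ k5
  have k6 := key (u0 * c * a * b)
  rw [rb, e1, hca2, hba2] at k6
  have hcab1 := R4 _ _ k6
  have k7 := key (u0 * b * a)
  rw [ra, hb1, e2, hcab1, hba2] at k7
  have hbab2 := R5 _ k7
  have k8 := key (u0 * b * c)
  rw [rc, hb1, e3, hacb2, hbc2] at k8
  have hbcb1 := R5b _ k8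
  have k9 := key (u0 * b * c * b * a)
  rw [ra, hbcb1, e4, hbab2] at k9
  have hv9 := R6 _ _ k9
  have k10 := key (u0 * b * a * b)
  rw [rb, hba2, e5, hv9, hbab2] at k10
  exact R7 _ k10

/- Group identities in `G`. -/
lemma xyz_sq : (gen 0 * gen 1 * gen 2) * (gen 0 * gen 1 * gen 2) = 1 := by
  have h : (FreeGroup.of (0 : Fin 3) * FreeGroup.of 1 * FreeGroup.of 2) *
      (FreeGroup.of 0 * FreeGroup.of 1 * FreeGroup.of 2) ∈ Subgroup.normalClosure hexRels :=
    Subgroup.subset_normalClosure (by simp [hexRels])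
  exact (QuotientGroup.eq_one_iff _).mpr h

lemma gen_inv (i : Fin 3) : (gen i)⁻¹ = gen i :=
  inv_eq_of_mul_eq_one_right (gen_mul_self i)

lemma gen_cancel (i : Fin 3) (w : G) : gen i * (gen i * w) = w := by
  rw [← mul_assoc, gen_mul_self, one_mul]

lemma habc0 : gen 0 * (gen 1 * gen 2) = gen 2 * (gen 1 * gen 0) := by
  have hinv : (gen 0 * gen 1 * gen 2)⁻¹ = gen 0 * gen 1 * gen 2 :=
    inv_eq_of_mul_eq_one_right xyz_sq
  have h := hinv.symm
  rw [mul_inv_rev, mul_inv_rev, gen_inv, gen_inv, gen_inv] at h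
  simpa only [mul_assoc] using h

lemma habc1 : gen 1 * (gen 0 * gen 2) = gen 2 * (gen 0 * gen 1) := by
  have h : gen 2 * (gen 0 * (gen 1 * gen 2)) * gen 2
      = gen 2 * (gen 2 * (gen 1 * gen 0)) * gen 2 := by rw [habc0]
  simp only [mul_assoc] at h
  simp only [gen_mul_self, mul_one, gen_cancel] at h
  exact h.symm

/-- The main theorem body. -/
theorem no_coloring_aux : ¬ ∃ φ : G → Fin 3, IsPerfectColoring φ !![1,2,0;1,0,2;0,2,1] := by
  rintro ⟨φ, hφ⟩
  have key := bridge hφ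
  -- there is a vertex of color 0
  have exists0 : ∃ w : G, φ w = 0 := by
    rcases tri (φ 1) with h | h | h
    · exact ⟨1, h⟩
    · have k := key 1
      rw [h] at k
      rcases R0of1 _ _ _ k with h' | h' | h'
      · exact ⟨1 * gen 0, h'⟩
      · exact ⟨1 * gen 1, h'⟩
      · exact ⟨1 * gen 2, h'⟩
    · have k := key 1
      rw [h] at k
      have h1 : ∃ v : G, φ v = 1 := by
        rcases R1of2 _ _ _ k with h' | h' | h'
        · exact ⟨1 * gen 0, h'⟩
        · exact ⟨1 * gen 1, h'⟩
        · exact ⟨1 * gen 2, h'⟩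
      obtain ⟨v, hv⟩ := h1
      have kv := key v
      rw [hv] at kv
      rcases R0of1 _ _ _ kv with h' | h' | h'
      · exact ⟨v * gen 0, h'⟩
      · exact ⟨v * gen 1, h'⟩
      · exact ⟨v * gen 2, h'⟩
  obtain ⟨w, hw⟩ := exists0
  have kw := key w
  rw [hw] at kw
  rcases R0of0 _ _ _ kw with h' | h' | h'
  · exact derivation φ (gen 0) (gen 1) (gen 2) (gen_mul_self 0) (gen_mul_self 1)
      (gen_mul_self 2) habc0 key w hw h'
  · exact derivation φ (gen 1) (gen 0) (gen 2) (gen_mul_self 1) (gen_mul_self 0)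
      (gen_mul_self 2) habc1 (fun u => Rperm1 _ _ _ _ (key u)) w hw h'
  · exact derivation φ (gen 2) (gen 1) (gen 0) (gen_mul_self 2) (gen_mul_self 1)
      (gen_mul_self 0) habc0.symm (fun u => Rperm2 _ _ _ _ (key u)) w hw h'

/-- The array `[12-102-21]` is infeasible: there is no perfect coloring of `H` with
parameter matrix `[[1,2,0],[1,0,2],[0,2,1]]`. -/
theorem no_coloring_12_102_21 :
    ¬ ∃ φ : G → Fin 3, IsPerfectColoring φ !![1,2,0;1,0,2;0,2,1] := by
  exact no_coloring_aux

end HexGrid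
end
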